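/- If d_0, d_1, …, d_n is a positive log-concave sequence of real numbers, then the polynomial Σ_{i=0}^n d_i (1+x)^i, expanded in powers of x, has a log-concave coefficient sequence. -/

import Mathlib

open Polynomial Finset

def PolyLogConcave (p : Polynomial ℝ) : Prop :=
  ∀ k : ℕ, 1 ≤ k → p.coeff (k - 1) * p.coeff (k + 1) ≤ (p.coeff k) ^ 2

/-- The coefficient sequence of `∑ i in [j,n], d i * (1+X)^(i-j)`. -/
noncomputable def eAux (n : ℕ) (d : ℕ → ℝ) (j k : ℕ) : ℝ :=
  ∑ i ∈ Finset.Icc j n, d i * ((i - j).choose k : ℝ)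

section aux

variable (n : ℕ) (d : ℕ → ℝ)

theorem eAux_nonneg (hd_pos : ∀ i ≤ n, 0 < d i) (j k : ℕ) : 0 ≤ eAux n d j k := by
  apply Finset.sum_nonneg
  intro i hi
  simp only [Finset.mem_Icc] at hi
  exact mul_nonneg (hd_pos i hi.2).le (by positivity)

theorem eAux_zero_succ (hd_pos : ∀ i ≤ n, 0 < d i) (j k : ℕ) (h : eAux n d j k = 0) : eAux n d j (k + 1) = 0 := by
  unfold eAux at h ⊢
  rw [Finset.sum_eq_zero_iff_of_nonneg] at h
  · apply Finset.sum_eq_zero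
    intro i hi
    have h1 := h i hi
    simp only [Finset.mem_Icc] at hi
    have hdi := (hd_pos i hi.2).ne'
    have : ((i - j).choose k : ℝ) = 0 := by
      rcases mul_eq_zero.1 h1 with h2 | h2
      · exact absurd h2 hdi
      · exact h2
    have hc : (i - j).choose k = 0 := by exact_mod_cast this
    rw [Nat.choose_eq_zero_iff] at hc
    have : (i - j).choose (k + 1) = 0 := Nat.choose_eq_zero_of_lt (lt_of_lt_of_le hc (Nat.le_succ k))
    simp [this]
  · intro i hi
    simp only [Finset.mem_Icc] at hi
    exact mul_nonneg (hd_pos i hi.2).le (by positivity)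

theorem eAux_rec_zero (j : ℕ) (hj : j < n) :
    eAux n d j 0 = d j + eAux n d (j + 1) 0 := by
  unfold eAux
  rw [show Finset.Icc j n = insert j (Finset.Icc (j + 1) n) by
    ext x; simp only [Finset.mem_Icc, Finset.mem_insert]; omega]
  rw [Finset.sum_insert (by simp)]
  simp

theorem eAux_rec_succ (j k : ℕ) (hj : j < n) :
    eAux n d j (k + 1) = eAux n d (j + 1) k + eAux n d (j + 1) (k + 1) := by
  unfold eAux
  rw [show Finset.Icc j n = insert j (Finset.Icc (j + 1) n) by
    ext x; simp only [Finset.mem_Icc, Finset.mem_insert]; omega]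
  rw [Finset.sum_insert (by simp), ← Finset.sum_add_distrib]
  have h0 : d j * (((j : ℕ) - j).choose (k + 1) : ℝ) = 0 := by simp
  rw [h0, zero_add]
  apply Finset.sum_congr rfl
  intro i hi
  simp only [Finset.mem_Icc] at hi
  have hij : j + 1 ≤ i := hi.1
  have : i - j = (i - (j + 1)) + 1 := by omega
  rw [this, Nat.choose_succ_succ']
  push_cast
  ring

end aux

section main

variable {n : ℕ} {d : ℕ → ℝ}

theorem ratio_lemma (hd_pos : ∀ i ≤ n, 0 < d i)
    (hd_lc : ∀ i, 1 ≤ i → i ≤ n - 1 → d (i - 1) * d (i + 1) ≤ (d i) ^ 2)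
    (j : ℕ) (hj : 1 ≤ j) :
    ∀ i, j ≤ i → i ≤ n → d (j - 1) * d i ≤ d j * d (i - 1) := by
  intro i
  induction i with
  | zero => intro h1 h2; omega
  | succ i ih =>
    intro h1 h2
    rcases Nat.lt_or_ge j (i + 1) with hlt | hge
    · have hji : j ≤ i := by omega
      have hin : i ≤ n := by omega
      have ihi := ih hji hin
      have hlc := hd_lc i (by omega) (by omega)
      have hdi : 0 < d i := hd_pos i hin
      have hdi1 : 0 < d (i + 1) := hd_pos (i + 1) h2
      have hdj1 : 0 < d (j - 1) := hd_pos (j - 1) (by omega)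
      have hdj : 0 < d j := hd_pos j (by omega)
      have hprev : 0 < d (i - 1) := hd_pos (i - 1) (by omega)
      have key : d (j - 1) * d (i + 1) * d i ≤ d j * d i * d i := by
        calc d (j - 1) * d (i + 1) * d i = (d (j - 1) * d i) * d (i + 1) := by ring
          _ ≤ (d j * d (i - 1)) * d (i + 1) := by nlinarith
          _ = d j * (d (i - 1) * d (i + 1)) := by ring
          _ ≤ d j * d i ^ 2 := by nlinarith
          _ = d j * d i * d i := by ring
      have : d (j - 1) * d (i + 1) ≤ d j * d i := le_of_mul_le_mul_right (by linarith [key]) hdi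
      simpa using this
    · have : j = i + 1 := by omega
      subst this
      simp [mul_comm]

theorem shift_lemma (hd_pos : ∀ i ≤ n, 0 < d i)
    (hd_lc : ∀ i, 1 ≤ i → i ≤ n - 1 → d (i - 1) * d (i + 1) ≤ (d i) ^ 2)
    (j k : ℕ) (hj : 1 ≤ j) :
    d (j - 1) * eAux n d (j + 1) k ≤ d j * eAux n d j k := by
  unfold eAux
  rw [Finset.mul_sum, Finset.mul_sum]
  calc ∑ i ∈ Finset.Icc (j + 1) n, d (j - 1) * (d i * ((i - (j + 1)).choose k : ℝ))
      ≤ ∑ i ∈ Finset.Icc (j + 1) n, d j * (d (i - 1) * (((i - 1) - j).choose k : ℝ)) := by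
        apply Finset.sum_le_sum
        intro i hi
        simp only [Finset.mem_Icc] at hi
        have hr := ratio_lemma hd_pos hd_lc j hj i (by omega) hi.2
        have heq : i - (j + 1) = (i - 1) - j := by omega
        rw [heq]
        have hc : (0:ℝ) ≤ (((i - 1) - j).choose k : ℝ) := by positivity
        nlinarith
    _ = ∑ m ∈ Finset.image (· - 1) (Finset.Icc (j + 1) n),
          d j * (d m * ((m - j).choose k : ℝ)) := by
        rw [Finset.sum_image]
        intro a ha b hb hab
        simp only [Finset.mem_coe, Finset.mem_Icc] at ha hb hab
        omega
    _ ≤ ∑ i ∈ Finset.Icc j n, d j * (d i * ((i - j).choose k : ℝ)) := by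
        apply Finset.sum_le_sum_of_subset_of_nonneg
        · intro m hm
          simp only [Finset.mem_image, Finset.mem_Icc] at hm ⊢
          obtain ⟨a, ha, rfl⟩ := hm
          omega
        · intro i hi _
          simp only [Finset.mem_Icc] at hi
          have := hd_pos i hi.2
          have := hd_pos j (by omega)
          positivity

theorem chain_lemma {a b c dd : ℝ} (ha : 0 ≤ a) (hb : 0 ≤ b) (hc : 0 ≤ c) (hdd : 0 ≤ dd)
    (h1 : a * c ≤ b ^ 2) (h2 : b * dd ≤ c ^ 2) (h3 : b = 0 → dd = 0) :
    a * dd ≤ b * c := by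
  rcases eq_or_lt_of_le hb with hb0 | hb0
  · rw [h3 hb0.symm]; simp [← hb0]
  rcases eq_or_lt_of_le hc with hc0 | hc0
  · have : dd ≤ 0 := by nlinarith
    have hdd0 : dd = 0 := le_antisymm this hdd
    simp [hdd0, ← hc0]
  · nlinarith [mul_le_mul h1 h2 (by positivity) (by positivity)]

/-- The main induction: for each `j ≤ n`, the coefficient sequence of
`q_j` is log-concave, and moreover prepending `d (j-1)` keeps it log-concave. -/
theorem main_induction (hd_pos : ∀ i ≤ n, 0 < d i)
    (hd_lc : ∀ i, 1 ≤ i → i ≤ n - 1 → d (i - 1) * d (i + 1) ≤ (d i) ^ 2) :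
    ∀ m j, j + m = n →
      (∀ k, eAux n d j k * eAux n d j (k + 2) ≤ (eAux n d j (k + 1)) ^ 2) ∧
      (1 ≤ j → d (j - 1) * eAux n d j 1 ≤ (eAux n d j 0) ^ 2) := by
  intro m
  induction m with
  | zero =>
    intro j hj
    have hjn : j = n := by omega
    subst hjn
    have hbase : ∀ k, eAux j d j (k + 1) = 0 := by
      intro k
      unfold eAux
      rw [Finset.Icc_self, Finset.sum_singleton]
      simp
    constructor
    · intro k
      have hb1 : eAux j d j (k + 2) = 0 := by simpa using hbase (k + 1)
      rw [hb1]
      have h1 := eAux_nonneg j d hd_pos j k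
      have h2 := eAux_nonneg j d hd_pos j (k + 1)
      nlinarith
    · intro _
      have hb0 : eAux j d j 1 = 0 := by simpa using hbase 0
      rw [hb0]
      have := eAux_nonneg j d hd_pos j 0
      nlinarith
  | succ m ih =>
    intro j hj
    have hjn : j < n := by omega
    obtain ⟨ih1, ih2⟩ := ih (j + 1) (by omega)
    -- abbreviations
    set e : ℕ → ℝ := eAux n d (j + 1) with he
    have hen : ∀ k, 0 ≤ e k := fun k => eAux_nonneg n d hd_pos (j + 1) k
    have hez : ∀ k, e k = 0 → e (k + 1) = 0 := fun k => eAux_zero_succ n d hd_pos (j + 1) k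
    have hdj : 0 < d j := hd_pos j (by omega)
    have hii : d j * e 1 ≤ (e 0) ^ 2 := by
      have := ih2 (by omega)
      simpa using this
    have r0 : eAux n d j 0 = d j + e 0 := eAux_rec_zero n d j hjn
    have rs : ∀ k, eAux n d j (k + 1) = e k + e (k + 1) :=
      fun k => eAux_rec_succ n d j k hjn
    constructor
    · intro k
      match k with
      | 0 =>
        rw [r0, rs 0, rs 1]
        have h02 : e 0 * e 2 ≤ (e 1) ^ 2 := ih1 0
        have hch : d j * e 2 ≤ e 0 * e 1 :=
          chain_lemma hdj.le (hen 0) (hen 1) (hen 2) hii h02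
            (fun h0 => hez 1 (hez 0 h0))
        nlinarith [hen 0, hen 1]
      | k + 1 =>
        rw [rs k, rs (k + 1), rs (k + 2)]
        have h1 : e k * e (k + 2) ≤ (e (k + 1)) ^ 2 := ih1 k
        have h2 : e (k + 1) * e (k + 3) ≤ (e (k + 2)) ^ 2 := ih1 (k + 1)
        have hch : e k * e (k + 3) ≤ e (k + 1) * e (k + 2) :=
          chain_lemma (hen k) (hen (k + 1)) (hen (k + 2)) (hen (k + 3)) h1 h2
            (fun h0 => hez (k + 2) (hez (k + 1) h0))
        nlinarith [hen (k + 1), hen (k + 2)]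
    · intro hj1
      have L0 : d (j - 1) * e 0 ≤ d j * eAux n d j 0 := shift_lemma hd_pos hd_lc j 0 hj1
      have L1 : d (j - 1) * e 1 ≤ d j * eAux n d j 1 := shift_lemma hd_pos hd_lc j 1 hj1
      have rs0 : eAux n d j 1 = e 0 + e 1 := by simpa using rs 0
      rw [r0] at L0
      rw [rs0] at L1
      rw [r0, rs0]
      nlinarith [hen 0, hen 1]

end main

theorem stmt5 (n : ℕ) (d : ℕ → ℝ)
    (hd_pos : ∀ i ≤ n, 0 < d i)
    (hd_lc : ∀ i, 1 ≤ i → i ≤ n - 1 → d (i - 1) * d (i + 1) ≤ (d i) ^ 2) :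
    PolyLogConcave (∑ i ∈ Finset.range (n + 1), C (d i) * (1 + X) ^ i) := by
  have hcoeff : ∀ k, (∑ i ∈ Finset.range (n + 1), C (d i) * (1 + X) ^ i : ℝ[X]).coeff k
      = eAux n d 0 k := by
    intro k
    rw [Polynomial.finset_sum_coeff]
    unfold eAux
    rw [show Finset.Icc 0 n = Finset.range (n + 1) by
      ext x; simp [Nat.lt_succ_iff]]
    apply Finset.sum_congr rfl
    intro i _
    rw [Polynomial.coeff_C_mul, Polynomial.coeff_one_add_X_pow]
    simp
  intro k hk
  obtain ⟨k', rfl⟩ : ∃ k', k = k' + 1 := ⟨k - 1, by omega⟩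
  rw [hcoeff, hcoeff, hcoeff]
  have := (main_induction hd_pos hd_lc n 0 (by omega)).1 k'
  simpa using this
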